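/- Let H be a finite simple graph with vertex set {1,…,N} and m edges, and let k be an integer with 1 ≤ k ≤ m. If H has a vertex cover of size at most k, then the edge set of H admits a partition into k nonempty parts C_1, …, C_k, each of which is a star (all edges of the part share a common vertex), and consequently the total cost Σ_{i=1}^k cost(C_i) of this partition is at most m − k. -/

import Mathlib

open SimpleGraph Finset

/-- For a graph on vertex set `Fin N`, the edge `e = {i, j}` is identified with the
point `x_e = b_i + b_j` in `ℝ^N`, where `b_i` is the `i`-th standard basis vector. -/
noncomputable def edgePoint (N : ℕ) (e : Sym2 (Fin N)) : EuclideanSpace ℝ (Fin N) :=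
  Sym2.lift ⟨fun i j => EuclideanSpace.single i (1 : ℝ) + EuclideanSpace.single j (1 : ℝ),
    fun _ _ => add_comm _ _⟩ e

/-- The (k-means) cost of a finite set `C` of edges:
`cost(C) = inf_{c ∈ ℝ^N} Σ_{e ∈ C} ‖x_e − c‖²`. -/
noncomputable def cost (N : ℕ) (C : Finset (Sym2 (Fin N))) : ℝ :=
  ⨅ c : EuclideanSpace ℝ (Fin N), ∑ e ∈ C, ‖edgePoint N e - c‖ ^ 2

/-- A star is a set of distinct edges all incident to a common vertex. -/
def IsStar {N : ℕ} (C : Finset (Sym2 (Fin N))) : Prop :=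
  ∃ v : Fin N, ∀ e ∈ C, v ∈ e

/-- A set `S` of vertices is a vertex cover of `H` if every edge of `H` has at
least one endpoint in `S`. -/
def IsVertexCover {W : Type*} (H : SimpleGraph W) (S : Set W) : Prop :=
  ∀ ⦃u v : W⦄, H.Adj u v → u ∈ S ∨ v ∈ S

/-- Let `H` be a finite simple graph on vertex set `{1, …, N}` with `m`
edges, and let `1 ≤ k ≤ m`. If `H` has a vertex cover of size at most `k`, then the edge
set of `H` admits a partition into `k` nonempty parts `C_1, …, C_k`, each of which is a
star, and the total cost `Σ_i cost(C_i)` is at most `m − k`. -/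
lemma cost_star_le {N : ℕ} (C : Finset (Sym2 (Fin N))) (hC : C.Nonempty) (hstar : IsStar C) :
    cost N C ≤ (C.card : ℝ) - 1 := by
  obtain ⟨v, hv⟩ := hstar
  classical
  set n : ℝ := (C.card : ℝ) with hn
  have hn0 : (0:ℝ) < n := by rw [hn]; exact_mod_cast Finset.card_pos.mpr hC
  set o : Sym2 (Fin N) → Fin N := fun e => if h : v ∈ e then Sym2.Mem.other h else v with ho
  have hspec : ∀ e ∈ C, s(v, o e) = e := by
    intro e he
    have h : v ∈ e := hv e he
    simp only [ho, dif_pos h]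
    exact Sym2.other_spec h
  have hoinj : ∀ e ∈ C, ∀ e' ∈ C, o e = o e' → e = e' := by
    intro e he e' he' h
    rw [← hspec e he, ← hspec e' he', h]
  set u : EuclideanSpace ℝ (Fin N) := ∑ e ∈ C, EuclideanSpace.single (o e) (1:ℝ) with hu
  have hinner : ∀ e ∈ C, inner ℝ (EuclideanSpace.single (o e) (1:ℝ)) u = (1:ℝ) := by
    intro e he
    rw [hu, inner_sum]
    have : ∀ e' ∈ C, (inner ℝ (EuclideanSpace.single (o e) (1:ℝ))
        (EuclideanSpace.single (o e') (1:ℝ)) : ℝ) = if e' = e then 1 else 0 := by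
      intro e' he'
      rw [EuclideanSpace.inner_single_left, EuclideanSpace.single_apply]
      by_cases h : e' = e
      · subst h; simp
      · have : o e' ≠ o e := fun hc => h (hoinj e' he' e he hc)
        simp [this, Ne.symm this, h]
    rw [Finset.sum_congr rfl this, Finset.sum_ite_eq' C e (fun _ => (1:ℝ)), if_pos he]
  have huu : (inner ℝ u u : ℝ) = n := by
    have h1 : (inner ℝ u u : ℝ) = ∑ e ∈ C, (inner ℝ (EuclideanSpace.single (o e) (1:ℝ)) u : ℝ) := by
      conv_lhs => rw [hu]
      exact sum_inner C _ u
    rw [h1, Finset.sum_congr rfl hinner, Finset.sum_const, nsmul_eq_mul, mul_one, hn]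
  have hnormu : ‖u‖ ^ 2 = n := by
    rw [← real_inner_self_eq_norm_sq]; exact huu
  set c₀ : EuclideanSpace ℝ (Fin N) := EuclideanSpace.single v 1 + n⁻¹ • u with hc₀
  have hbdd : BddBelow (Set.range fun c : EuclideanSpace ℝ (Fin N) =>
      ∑ e ∈ C, ‖edgePoint N e - c‖ ^ 2) := by
    refine ⟨0, ?_⟩
    rintro x ⟨c, rfl⟩
    exact Finset.sum_nonneg fun e _ => sq_nonneg _
  refine le_trans (ciInf_le hbdd c₀) ?_
  have hterm : ∀ e ∈ C, ‖edgePoint N e - c₀‖ ^ 2 = 1 - n⁻¹ := by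
    intro e he
    have hep : edgePoint N e = EuclideanSpace.single v 1 + EuclideanSpace.single (o e) 1 := by
      conv_lhs => rw [← hspec e he]
      simp [edgePoint]
    have hsub : edgePoint N e - c₀ = EuclideanSpace.single (o e) 1 - n⁻¹ • u := by
      rw [hep, hc₀]; abel
    rw [hsub, norm_sub_sq_real, EuclideanSpace.norm_single, real_inner_smul_right,
      hinner e he, norm_smul, mul_pow, hnormu]
    have : ‖n⁻¹‖ ^ 2 * n = n⁻¹ := by
      rw [Real.norm_eq_abs, sq_abs, sq]
      field_simp
    rw [this, norm_one, one_pow]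
    ring
  rw [Finset.sum_congr rfl hterm, Finset.sum_const, nsmul_eq_mul, ← hn]
  have : n * (1 - n⁻¹) = n - 1 := by field_simp
  linarith [this]

lemma split_parts {N : ℕ} (E : Finset (Sym2 (Fin N))) (d : ℕ) :
    ∀ (P : Finset (Finset (Sym2 (Fin N)))),
      (∀ A ∈ P, A.Nonempty) → (∀ A ∈ P, IsStar A) →
      (∀ A ∈ P, ∀ B ∈ P, A ≠ B → Disjoint A B) →
      P.biUnion id = E → P.card + d ≤ E.card →
      ∃ Q : Finset (Finset (Sym2 (Fin N))),
        (∀ A ∈ Q, A.Nonempty) ∧ (∀ A ∈ Q, IsStar A) ∧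
        (∀ A ∈ Q, ∀ B ∈ Q, A ≠ B → Disjoint A B) ∧
        Q.biUnion id = E ∧ Q.card = P.card + d := by
  classical
  induction d with
  | zero => intro P h1 h2 h3 h4 _; exact ⟨P, h1, h2, h3, h4, rfl⟩
  | succ d ih =>
    intro P h1 h2 h3 h4 h5
    have hbig : ∃ A ∈ P, 2 ≤ A.card := by
      by_contra hcon
      push_neg at hcon
      have hle : E.card ≤ P.card := by
        rw [← h4]
        refine le_trans Finset.card_biUnion_le ?_
        refine le_trans (Finset.sum_le_sum (fun A hA => Nat.lt_succ_iff.mp (hcon A hA))) ?_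
        simp
      omega
    obtain ⟨A, hA, hA2⟩ := hbig
    obtain ⟨e, he⟩ := h1 A hA
    have hAe : (A.erase e).Nonempty := by
      rw [← Finset.card_pos, Finset.card_erase_of_mem he]
      omega
    have hnotin : ∀ B ∈ P.erase A, e ∉ B := by
      intro B hB
      have hd : Disjoint A B := h3 A hA B (Finset.mem_of_mem_erase hB)
        (Ne.symm (Finset.ne_of_mem_erase hB))
      exact Finset.disjoint_left.mp hd he
    have hs1 : ({e} : Finset (Sym2 (Fin N))) ≠ A.erase e := by
      intro h
      have := h ▸ Finset.mem_singleton_self e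
      exact Finset.notMem_erase e A this
    have hs2 : ({e} : Finset (Sym2 (Fin N))) ∉ P.erase A := by
      intro h
      exact hnotin _ h (Finset.mem_singleton_self e)
    have hs3 : A.erase e ∉ P.erase A := by
      intro h
      obtain ⟨f, hf⟩ := hAe
      have hd : Disjoint A (A.erase e) := h3 A hA _ (Finset.mem_of_mem_erase h)
        (Ne.symm (Finset.ne_of_mem_erase h))
      exact Finset.disjoint_left.mp hd (Finset.mem_of_mem_erase hf) hf
    set P' := insert ({e} : Finset (Sym2 (Fin N))) (insert (A.erase e) (P.erase A)) with hP'
    have hcardP' : P'.card = P.card + 1 := by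
      rw [hP', Finset.card_insert_of_notMem, Finset.card_insert_of_notMem hs3,
        Finset.card_erase_of_mem hA]
      · have : 1 ≤ P.card := Finset.card_pos.mpr ⟨A, hA⟩
        omega
      · simp only [Finset.mem_insert]
        push_neg
        exact ⟨hs1, hs2⟩
    have hmemP' : ∀ X, X ∈ P' ↔ X = {e} ∨ X = A.erase e ∨ X ∈ P.erase A := by
      intro X; simp [hP']
    have h1' : ∀ X ∈ P', X.Nonempty := by
      intro X hX
      rcases (hmemP' X).mp hX with rfl | rfl | hX
      · exact ⟨e, Finset.mem_singleton_self e⟩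
      · exact hAe
      · exact h1 X (Finset.mem_of_mem_erase hX)
    have h2' : ∀ X ∈ P', IsStar X := by
      intro X hX
      obtain ⟨v, hv⟩ := h2 A hA
      rcases (hmemP' X).mp hX with rfl | rfl | hX
      · exact ⟨v, fun f hf => by rw [Finset.mem_singleton] at hf; exact hf ▸ hv e he⟩
      · exact ⟨v, fun f hf => hv f (Finset.mem_of_mem_erase hf)⟩
      · exact h2 X (Finset.mem_of_mem_erase hX)
    have dj1 : Disjoint ({e} : Finset (Sym2 (Fin N))) (A.erase e) :=
      Finset.disjoint_singleton_left.mpr (Finset.notMem_erase e A)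
    have dj2 : ∀ B ∈ P.erase A, Disjoint ({e} : Finset (Sym2 (Fin N))) B :=
      fun B hB => Finset.disjoint_singleton_left.mpr (hnotin B hB)
    have dj3 : ∀ B ∈ P.erase A, Disjoint (A.erase e) B := by
      intro B hB
      exact Disjoint.mono_left (Finset.erase_subset e A)
        (h3 A hA B (Finset.mem_of_mem_erase hB) (Ne.symm (Finset.ne_of_mem_erase hB)))
    have h3' : ∀ X ∈ P', ∀ Y ∈ P', X ≠ Y → Disjoint X Y := by
      intro X hX Y hY hXY
      rcases (hmemP' X).mp hX with rfl | rfl | hX <;>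
        rcases (hmemP' Y).mp hY with rfl | rfl | hY
      · exact absurd rfl hXY
      · exact dj1
      · exact dj2 Y hY
      · exact dj1.symm
      · exact absurd rfl hXY
      · exact dj3 Y hY
      · exact (dj2 X hX).symm
      · exact (dj3 X hX).symm
      · exact h3 X (Finset.mem_of_mem_erase hX) Y (Finset.mem_of_mem_erase hY) hXY
    have h4' : P'.biUnion id = E := by
      rw [hP', Finset.biUnion_insert, Finset.biUnion_insert]
      simp only [id_eq]
      rw [← Finset.union_assoc, ← Finset.insert_eq, Finset.insert_erase he, ← h4]
      conv_rhs => rw [← Finset.insert_erase hA, Finset.biUnion_insert]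
      rfl
    have h5' : P'.card + d ≤ E.card := by omega
    obtain ⟨Q, q1, q2, q3, q4, q5⟩ := ih P' h1' h2' h3' h4' h5'
    exact ⟨Q, q1, q2, q3, q4, by omega⟩

theorem statement10 {N : ℕ} (H : SimpleGraph (Fin N)) [DecidableRel H.Adj]
    (m : ℕ) (hm : H.edgeFinset.card = m) (k : ℕ) (hk1 : 1 ≤ k) (hkm : k ≤ m)
    (hcover : ∃ S : Finset (Fin N), _root_.IsVertexCover H ↑S ∧ S.card ≤ k) :
    ∃ CC : Fin k → Finset (Sym2 (Fin N)),
      (∀ i, (CC i).Nonempty) ∧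
      (∀ i, IsStar (CC i)) ∧
      (∀ i j, i ≠ j → Disjoint (CC i) (CC j)) ∧
      (∀ e, e ∈ H.edgeFinset ↔ ∃ i, e ∈ CC i) ∧
      ∑ i, cost N (CC i) ≤ (m : ℝ) - k := by
  classical
  obtain ⟨S, hScover, hScard⟩ := hcover
  set E := H.edgeFinset with hE
  have hcov : ∀ e ∈ E, ∃ v, v ∈ S ∧ v ∈ e := by
    intro e he
    induction e using Sym2.ind with
    | _ a b =>
      rw [hE, SimpleGraph.mem_edgeFinset, SimpleGraph.mem_edgeSet] at he
      rcases hScover he with h | h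
      · exact ⟨a, h, Sym2.mem_mk_left a b⟩
      · exact ⟨b, h, Sym2.mem_mk_right a b⟩
  set g : Sym2 (Fin N) → Fin N :=
    fun e => if h : ∃ v, v ∈ S ∧ v ∈ e then h.choose else (Quot.out e).1 with hgdef
  have hg1 : ∀ e ∈ E, g e ∈ S ∧ g e ∈ e := by
    intro e he
    have h := hcov e he
    simp only [hgdef, dif_pos h]
    exact h.choose_spec
  set F : Fin N → Finset (Sym2 (Fin N)) := fun v => E.filter (fun e => g e = v) with hF
  set P := (E.image g).image F with hP
  have pmem : ∀ A ∈ P, ∃ v ∈ E.image g, F v = A := by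
    intro A hA
    rw [hP] at hA
    obtain ⟨v, hv, hFv⟩ := Finset.mem_image.mp hA
    exact ⟨v, hv, hFv⟩
  have p1 : ∀ A ∈ P, A.Nonempty := by
    intro A hA
    obtain ⟨v, hv, rfl⟩ := pmem A hA
    obtain ⟨e, he, hge⟩ := Finset.mem_image.mp hv
    exact ⟨e, Finset.mem_filter.mpr ⟨he, hge⟩⟩
  have p2 : ∀ A ∈ P, IsStar A := by
    intro A hA
    obtain ⟨v, hv, rfl⟩ := pmem A hA
    refine ⟨v, fun e he => ?_⟩
    obtain ⟨heE, hge⟩ := Finset.mem_filter.mp he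
    exact hge ▸ (hg1 e heE).2
  have p3 : ∀ A ∈ P, ∀ B ∈ P, A ≠ B → Disjoint A B := by
    intro A hA B hB hAB
    obtain ⟨v, hv, rfl⟩ := pmem A hA
    obtain ⟨w, hw, rfl⟩ := pmem B hB
    have hvw : v ≠ w := fun h => hAB (h ▸ rfl)
    rw [Finset.disjoint_left]
    intro e heA heB
    exact hvw ((Finset.mem_filter.mp heA).2 ▸ (Finset.mem_filter.mp heB).2 ▸ rfl)
  have p4 : P.biUnion id = E := by
    ext e
    simp only [Finset.mem_biUnion, id_eq]
    constructor
    · rintro ⟨A, hA, heA⟩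
      obtain ⟨v, _, rfl⟩ := pmem A hA
      exact (Finset.mem_filter.mp heA).1
    · intro he
      refine ⟨F (g e), ?_, Finset.mem_filter.mpr ⟨he, rfl⟩⟩
      rw [hP]
      exact Finset.mem_image_of_mem F (Finset.mem_image_of_mem g he)
  have p5 : P.card ≤ k := by
    calc P.card ≤ (E.image g).card := Finset.card_image_le
    _ ≤ S.card := Finset.card_le_card (fun v hv => by
        obtain ⟨e, he, hge⟩ := Finset.mem_image.mp hv
        exact hge ▸ (hg1 e he).1)
    _ ≤ k := hScard
  have hEcard : E.card = m := hm
  obtain ⟨Q, q1, q2, q3, q4, q5⟩ := split_parts E (k - P.card) P p1 p2 p3 p4 (by omega)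
  have hQcard : Q.card = k := by omega
  set CC : Fin k → Finset (Sym2 (Fin N)) :=
    fun i => (Q.equivFin.symm (Fin.cast hQcard.symm i)).1 with hCC
  have hCCmem : ∀ i, CC i ∈ Q := fun i => (Q.equivFin.symm (Fin.cast hQcard.symm i)).2
  have hCCinj : ∀ i j, CC i = CC j → i = j := by
    intro i j h
    have h2 : Q.equivFin.symm (Fin.cast hQcard.symm i)
        = Q.equivFin.symm (Fin.cast hQcard.symm j) := Subtype.ext h
    have h3 := Q.equivFin.symm.injective h2
    have h4 := congrArg Fin.val h3
    exact Fin.ext h4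
  have hiff : ∀ e, e ∈ E ↔ ∃ i, e ∈ CC i := by
    intro e
    constructor
    · intro he
      rw [← q4] at he
      obtain ⟨A, hAQ, heA⟩ := Finset.mem_biUnion.mp he
      refine ⟨Fin.cast hQcard (Q.equivFin ⟨A, hAQ⟩), ?_⟩
      have hcast : Fin.cast hQcard.symm (Fin.cast hQcard (Q.equivFin ⟨A, hAQ⟩))
          = Q.equivFin ⟨A, hAQ⟩ := by ext; simp
      show e ∈ (Q.equivFin.symm _).1
      rw [hcast, Equiv.symm_apply_apply]
      exact heA
    · rintro ⟨i, hi⟩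
      rw [← q4]
      exact Finset.mem_biUnion.mpr ⟨CC i, hCCmem i, hi⟩
  have hdisj : ∀ i j, i ≠ j → Disjoint (CC i) (CC j) := by
    intro i j hij
    exact q3 (CC i) (hCCmem i) (CC j) (hCCmem j) (fun h => hij (hCCinj i j h))
  have hcardsum : ∑ i, (CC i).card = m := by
    have hEeq : E = Finset.univ.biUnion CC := by
      ext e
      rw [hiff e]
      simp [Finset.mem_biUnion]
    rw [← hEcard, hEeq, Finset.card_biUnion]
    intro i _ j _ hij
    exact hdisj i j hij
  refine ⟨CC, fun i => q1 (CC i) (hCCmem i), fun i => q2 (CC i) (hCCmem i), hdisj,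
    fun e => hiff e, ?_⟩
  calc ∑ i, cost N (CC i) ≤ ∑ i, (((CC i).card : ℝ) - 1) :=
        Finset.sum_le_sum (fun i _ => cost_star_le _ (q1 _ (hCCmem i)) (q2 _ (hCCmem i)))
    _ = (m : ℝ) - k := by
        have h1 : ∑ i : Fin k, ((CC i).card : ℝ) = (m : ℝ) := by
          rw [← hcardsum]
          push_cast
          rfl
        rw [Finset.sum_sub_distrib, h1, Finset.sum_const, Finset.card_univ, Fintype.card_fin,
          nsmul_eq_mul, mul_one]
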